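/- If two permutations π and σ of equal length are equivalent under the bidirectional replacement 123 ↔ 132 (here 123 and 132 are ★-patterns containing no ★, so each such replacement preserves length), then π and σ are equivalent under the bidirectional replacement 123 ↔ 1★2. -/

import Mathlib

/-!
Pattern-replacement equivalences between permutations of different lengths
(arXiv:1309.4802). A ★-pattern is encoded as a `List (Option ℕ)`, where `none`
is the placeholder ★ and `some k` an integer entry.
-/

/-- A ★-pattern / star-string entry: `none` is ★, `some k` an integer `k`. -/
abbrev SPat := List (Option ℕ)

/-- The integer entries of a star-string, in order. -/
def ints (ρ : SPat) : List ℕ := ρ.filterMap id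

/-- Two lists of naturals are order-isomorphic. -/
def OrdIso (u v : List ℕ) : Prop :=
  u.length = v.length ∧
  ∀ i j, i < u.length → j < u.length → (u.getD i 0 < u.getD j 0 ↔ v.getD i 0 < v.getD j 0)

/-- A valid string of distinct positive integers and ★'s. -/
def StarStr (ρ : SPat) : Prop := (ints ρ).Nodup ∧ ∀ k ∈ ints ρ, 0 < k

/-- `r` (entry by entry) forms a copy of the ★-pattern `δ`: ★'s in the same
positions, and the integer entries order-isomorphic. -/
def IsCopy (r δ : SPat) : Prop :=
  r.length = δ.length ∧
  (∀ i, (r.getD i none = none ↔ δ.getD i none = none)) ∧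
  OrdIso (ints r) (ints δ)

/-- `Repl a b ρ₁ ρ₂` : `ρ₂` is obtained from `ρ₁` by replacing an occurrence of `a`
as a (not necessarily contiguous) substring of `ρ₁` by `b`, entry by entry at the
same positions. -/
inductive Repl : SPat → SPat → SPat → SPat → Prop
  | nil : Repl [] [] [] []
  | keep {a b ρ₁ ρ₂} (x : Option ℕ) : Repl a b ρ₁ ρ₂ → Repl a b (x :: ρ₁) (x :: ρ₂)
  | repl {a b ρ₁ ρ₂} (x y : Option ℕ) :
      Repl a b ρ₁ ρ₂ → Repl (x :: a) (y :: b) (x :: ρ₁) (y :: ρ₂)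

/-- `π` is a permutation of `1, …, n` (as a list). -/
def IsPermList (π : List ℕ) : Prop := π.Perm (List.range' 1 π.length)

/-- `σ` is a result of the replacement `α → β` applied to the permutation `π`:
(1) `ρ₁` is `π` renumbered (order-isomorphically) with ★'s inserted anywhere;
(2) a substring `a` of `ρ₁` forming a copy of `α` is replaced (in place) by a
string `b` that is a copy of `β`, whose integers meet `ρ₁` only inside `a`, and
which agrees with `a` on the integer entries common to `α` and `β`;
(3) dropping ★'s and renumbering gives the permutation `σ`. -/
def IsResult (α β : SPat) (π σ : List ℕ) : Prop :=
  ∃ ρ₁ ρ₂ a b : SPat,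
    StarStr ρ₁ ∧ OrdIso π (ints ρ₁) ∧
    IsCopy a α ∧
    StarStr b ∧ IsCopy b β ∧
    (∀ k ∈ ints b, k ∈ ints ρ₁ → k ∈ ints a) ∧
    (∀ i j x, α.getD i none = some x → β.getD j none = some x →
      a.getD i none = b.getD j none) ∧
    Repl a b ρ₁ ρ₂ ∧
    IsPermList σ ∧ OrdIso (ints ρ₂) σ

/-- Equivalence under the bidirectional replacement `α ↔ β`: a finite sequence
of `α → β` and `β → α` replacements. -/
def PermEquiv (α β : SPat) (π σ : List ℕ) : Prop :=
  Relation.ReflTransGen (fun τ υ => IsResult α β τ υ ∨ IsResult β α τ υ) π σ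

/-- `π` is isolated under `α ↔ β`: no other permutation is equivalent to it. -/
def Isolated (α β : SPat) (π : List ℕ) : Prop :=
  ∀ σ : List ℕ, IsPermList σ → PermEquiv α β π σ → σ = π

/-- The identity permutation `1 2 ⋯ n`. -/
def idPerm (n : ℕ) : List ℕ := List.range' 1 n

/-- The reverse identity permutation `n (n-1) ⋯ 1`. -/
def ridPerm (n : ℕ) : List ℕ := (List.range' 1 n).reverse

def pat123 : SPat := [some 1, some 2, some 3]
def pat132 : SPat := [some 1, some 3, some 2]
def patS32 : SPat := [none, some 3, some 2]
def pat3S2 : SPat := [some 3, none, some 2]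
def pat32S : SPat := [some 3, some 2, none]
def patS31 : SPat := [none, some 3, some 1]
def pat3S1 : SPat := [some 3, none, some 1]
def pat31S : SPat := [some 3, some 1, none]
def patS21 : SPat := [none, some 2, some 1]
def pat2S1 : SPat := [some 2, none, some 1]
def pat21S : SPat := [some 2, some 1, none]
def pat12S : SPat := [some 1, some 2, none]
def pat1S3 : SPat := [some 1, none, some 3]
def patS23 : SPat := [none, some 2, some 3]
def patS12 : SPat := [none, some 1, some 2]
def pat23S : SPat := [some 2, some 3, none]
def pat13S : SPat := [some 1, some 3, none]
def pat1S2 : SPat := [some 1, none, some 2]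

section AuxIntsRepl

@[simp] lemma ints_nil : ints ([] : SPat) = [] := rfl
@[simp] lemma ints_cons_some (k : ℕ) (l : SPat) : ints (some k :: l) = k :: ints l := rfl
@[simp] lemma ints_cons_none (l : SPat) : ints (none :: l) = ints l := rfl
@[simp] lemma ints_append (A B : SPat) : ints (A ++ B) = ints A ++ ints B := by
  simp [ints]

lemma OrdIso.symm' {u v : List ℕ} (h : OrdIso u v) : OrdIso v u := by
  obtain ⟨hl, hiff⟩ := h
  refine ⟨hl.symm, fun i j hi hj => ?_⟩
  rw [← hl] at hi hj
  exact (hiff i j hi hj).symm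

lemma repl_refl (D : SPat) : Repl [] [] D D := by
  induction D with
  | nil => exact .nil
  | cons x D ih => exact .keep x ih

lemma repl_prefix (A : SPat) {a b ρ₁ ρ₂ : SPat} (h : Repl a b ρ₁ ρ₂) :
    Repl a b (A ++ ρ₁) (A ++ ρ₂) := by
  induction A with
  | nil => exact h
  | cons x A ih => exact .keep x ih

lemma repl_build3 (A B C D : SPat) (o1 u1 o2 u2 o3 u3 : Option ℕ) :
    Repl [o1,o2,o3] [u1,u2,u3] (A++o1::B++o2::C++o3::D) (A++u1::B++u2::C++u3::D) := by
  have := repl_prefix A (.repl o1 u1 (repl_prefix B (.repl o2 u2 (repl_prefix C (.repl o3 u3 (repl_refl D))))))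
  simpa using this

lemma repl_decomp0 {a b ρ₁ ρ₂ : SPat} (h : Repl a b ρ₁ ρ₂) (ha : a = []) : ρ₁ = ρ₂ := by
  induction h with
  | nil => rfl
  | keep x h ih => rw [ih ha]
  | repl x y h ih => simp at ha

lemma repl_decomp1 {a b ρ₁ ρ₂ : SPat} (h : Repl a b ρ₁ ρ₂) (o1 u1 : Option ℕ)
    (ha : a = [o1]) (hb : b = [u1]) :
    ∃ C D, ρ₁ = C ++ o1 :: D ∧ ρ₂ = C ++ u1 :: D := by
  induction h with
  | nil => simp at ha
  | keep x h ih =>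
      obtain ⟨C, D, h1, h2⟩ := ih ha hb
      exact ⟨x :: C, D, by simp [h1], by simp [h2]⟩
  | repl x y h ih =>
      obtain ⟨rfl, rfl⟩ := List.cons_eq_cons.mp ha
      obtain ⟨rfl, rfl⟩ := List.cons_eq_cons.mp hb
      exact ⟨[], _, rfl, by rw [repl_decomp0 h rfl]; simp⟩

end AuxIntsRepl
section AuxDecomp

lemma repl_decomp2 {a b ρ₁ ρ₂ : SPat} (h : Repl a b ρ₁ ρ₂) (o1 u1 o2 u2 : Option ℕ)
    (ha : a = [o1, o2]) (hb : b = [u1, u2]) :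
    ∃ B C D, ρ₁ = B ++ o1 :: C ++ o2 :: D ∧ ρ₂ = B ++ u1 :: C ++ u2 :: D := by
  induction h with
  | nil => simp at ha
  | keep x h ih =>
      obtain ⟨B, C, D, h1, h2⟩ := ih ha hb
      exact ⟨x :: B, C, D, by simp [h1], by simp [h2]⟩
  | repl x y h ih =>
      obtain ⟨rfl, ha2⟩ := List.cons_eq_cons.mp ha
      obtain ⟨rfl, hb2⟩ := List.cons_eq_cons.mp hb
      obtain ⟨C, D, h1, h2⟩ := repl_decomp1 h o2 u2 ha2 hb2
      exact ⟨[], C, D, by simp [h1], by simp [h2]⟩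

lemma repl_decomp3 {ρ₁ ρ₂ : SPat} (o1 u1 o2 u2 o3 u3 : Option ℕ)
    (h : Repl [o1, o2, o3] [u1, u2, u3] ρ₁ ρ₂) :
    ∃ A B C D, ρ₁ = A ++ o1 :: B ++ o2 :: C ++ o3 :: D ∧
      ρ₂ = A ++ u1 :: B ++ u2 :: C ++ u3 :: D := by
  generalize ha : [o1, o2, o3] = a at h
  generalize hb : [u1, u2, u3] = b at h
  induction h with
  | nil => simp at ha
  | keep x h ih =>
      obtain ⟨A, B, C, D, h1, h2⟩ := ih ha hb
      exact ⟨x :: A, B, C, D, by simp [h1], by simp [h2]⟩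
  | repl x y h ih =>
      obtain ⟨rfl, ha2⟩ := List.cons_eq_cons.mp ha.symm
      obtain ⟨rfl, hb2⟩ := List.cons_eq_cons.mp hb.symm
      obtain ⟨B, C, D, h1, h2⟩ := repl_decomp2 h o2 u2 o3 u3 ha2 hb2
      exact ⟨[], B, C, D, by simp [h1], by simp [h2]⟩

end AuxDecomp
section AuxRank

/-- rank of `v` in `l`: number of entries smaller than `v`. -/
def rnk (l : List ℕ) (v : ℕ) : ℕ := (l.filter (fun u => decide (u < v))).length

lemma rnk_mono (l : List ℕ) {u v : ℕ} (h : u ≤ v) : rnk l u ≤ rnk l v := by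
  exact List.Sublist.length_le <| List.monotone_filter_right l
    (fun a ha => by simpa using lt_of_lt_of_le (by simpa using ha) h)

lemma rnk_strict (l : List ℕ) {u v : ℕ} (hu : u ∈ l) (h : u < v) :
    rnk l u < rnk l v := by
  have hsub : List.Sublist (l.filter (fun a => decide (a < u))) (l.filter (fun a => decide (a < v))) :=
    List.monotone_filter_right l (fun a ha => by simpa using lt_trans (by simpa using ha) h)
  rcases Nat.lt_or_ge (rnk l u) (rnk l v) with h' | h'
  · exact h'
  · exfalso
    have heq := hsub.eq_of_length (le_antisymm (hsub.length_le) h')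
    have : u ∈ l.filter (fun a => decide (a < v)) := by simp [hu, h]
    rw [← heq] at this
    simp at this

lemma rnk_lt_length {l : List ℕ} {v : ℕ} (hv : v ∈ l) : rnk l v < l.length := by
  rcases Nat.lt_or_ge (rnk l v) l.length with h | h
  · exact h
  · exfalso
    have hsub : List.Sublist (l.filter (fun a => decide (a < v))) l := List.filter_sublist
    have heq := hsub.eq_of_length (le_antisymm hsub.length_le h)
    have : v ∈ l.filter (fun a => decide (a < v)) := by rw [heq]; exact hv
    simp at this

/-- standardization of a list of naturals. -/
def stdz (l : List ℕ) : List ℕ := l.map (fun v => rnk l v + 1)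

lemma stdz_isPermList {l : List ℕ} (hl : l.Nodup) : IsPermList (stdz l) := by
  unfold IsPermList
  have hlen : (stdz l).length = l.length := by simp [stdz]
  rw [hlen]
  have hnd : (stdz l).Nodup := by
    refine List.Nodup.map_on ?_ hl
    intro x hx y hy hxy
    by_contra hne
    rcases Nat.lt_or_ge x y with h | h
    · exact absurd hxy (by have := rnk_strict l hx h; omega)
    · have h' : y < x := lt_of_le_of_ne h (Ne.symm hne)
      exact absurd hxy (by have := rnk_strict l hy h'; omega)
  have hsub : stdz l ⊆ List.range' 1 l.length := by
    intro k hk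
    simp only [stdz, List.mem_map] at hk
    obtain ⟨v, hv, rfl⟩ := hk
    have := rnk_lt_length hv
    rw [List.mem_range'_1]
    omega
  have hsp : List.Subperm (stdz l) (List.range' 1 l.length) := List.subperm_of_subset hnd hsub
  exact hsp.perm_of_length_le (by simp [hlen])

lemma ordIso_stdz (l : List ℕ) : OrdIso l (stdz l) := by
  refine ⟨by simp [stdz], fun i j hi hj => ?_⟩
  have hgi : (stdz l).getD i 0 = rnk l (l.getD i 0) + 1 := by
    rw [List.getD_eq_getElem _ _ hi, List.getD_eq_getElem _ _ (by simpa [stdz] using hi)]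
    simp [stdz]
  have hgj : (stdz l).getD j 0 = rnk l (l.getD j 0) + 1 := by
    rw [List.getD_eq_getElem _ _ hj, List.getD_eq_getElem _ _ (by simpa [stdz] using hj)]
    simp [stdz]
  rw [hgi, hgj]
  constructor
  · intro h
    have : l.getD i 0 ∈ l := by
      rw [List.getD_eq_getElem _ _ hi]; exact List.getElem_mem _
    have := rnk_strict l this h
    omega
  · intro h
    by_contra hle
    push_neg at hle
    have := rnk_mono l hle
    omega

lemma le_foldr_max (l : List ℕ) : ∀ k ∈ l, k ≤ l.foldr max 0 := by
  induction l with
  | nil => simp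
  | cons x l ih =>
      intro k hk
      rcases List.mem_cons.mp hk with rfl | hk
      · simp [le_max_left]
      · exact le_trans (ih k hk) (by simp [le_max_right])

end AuxRank
section AuxCopy

lemma ordIso_pair' {u v : ℕ} (h : u < v) : OrdIso [u, v] [1, 2] := by
  refine ⟨rfl, fun i j hi hj => ?_⟩
  simp only [List.length_cons, List.length_nil] at hi hj
  interval_cases i <;> interval_cases j <;> simp [List.getD] <;> omega

lemma ordIso_triple' {u v w : ℕ} (h1 : u < v) (h2 : v < w) : OrdIso [u, v, w] [1, 2, 3] := by
  refine ⟨rfl, fun i j hi hj => ?_⟩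
  simp only [List.length_cons, List.length_nil] at hi hj
  interval_cases i <;> interval_cases j <;> simp [List.getD] <;> omega

lemma isCopy_123 {x m Z : ℕ} (h1 : x < m) (h2 : m < Z) :
    IsCopy [some x, some m, some Z] pat123 := by
  refine ⟨rfl, fun i => ?_, ?_⟩
  · rcases i with _ | _ | _ | i <;> simp [pat123]
  · simpa [ints, pat123] using ordIso_triple' h1 h2

lemma isCopy_1S2 {x w : ℕ} (h : x < w) :
    IsCopy [some x, none, some w] pat1S2 := by
  refine ⟨rfl, fun i => ?_, ?_⟩
  · rcases i with _ | _ | _ | i <;> simp [pat1S2]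
  · simpa [ints, pat1S2] using ordIso_pair' h

lemma copy_shape3 {a : SPat} {p1 p2 p3 : ℕ} (h : IsCopy a [some p1, some p2, some p3]) :
    ∃ u v w, a = [some u, some v, some w] ∧ OrdIso [u, v, w] [p1, p2, p3] := by
  obtain ⟨hlen, hnone, hiso⟩ := h
  rcases a with _ | ⟨o1, _ | ⟨o2, _ | ⟨o3, _ | rest⟩⟩⟩ <;> simp at hlen
  obtain ⟨u, rfl⟩ : ∃ u, o1 = some u := by
    have := hnone 0
    rcases o1 with _ | u
    · simp [List.getD] at this
    · exact ⟨u, rfl⟩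
  obtain ⟨v, rfl⟩ : ∃ v, o2 = some v := by
    have := hnone 1
    rcases o2 with _ | v
    · simp [List.getD] at this
    · exact ⟨v, rfl⟩
  obtain ⟨w, rfl⟩ : ∃ w, o3 = some w := by
    have := hnone 2
    rcases o3 with _ | w
    · simp [List.getD] at this
    · exact ⟨w, rfl⟩
  exact ⟨u, v, w, rfl, by simpa [ints] using hiso⟩

lemma ordIso3_lt {u v w a b c : ℕ} (h : OrdIso [u, v, w] [a, b, c]) :
    (u < v ↔ a < b) ∧ (v < w ↔ b < c) ∧ (u < w ↔ a < c) ∧ (w < v ↔ c < b) := by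
  refine ⟨?_, ?_, ?_, ?_⟩
  · simpa [List.getD] using h.2 0 1 (by simp) (by simp)
  · simpa [List.getD] using h.2 1 2 (by simp) (by simp)
  · simpa [List.getD] using h.2 0 2 (by simp) (by simp)
  · simpa [List.getD] using h.2 2 1 (by simp) (by simp)

end AuxCopy

section AuxCommon

lemma common_1S2_123 (x w Z : ℕ) : ∀ i j v, pat1S2.getD i none = some v →
    pat123.getD j none = some v →
    ([some x, none, some w] : SPat).getD i none = ([some x, some w, some Z] : SPat).getD j none := by
  intro i j v hi hj
  rcases i with _ | _ | _ | i <;> rcases j with _ | _ | _ | j <;>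
    simp [pat1S2, pat123] at hi hj ⊢ <;> omega

lemma common_123_1S2 (x m Z : ℕ) : ∀ i j v, pat123.getD i none = some v →
    pat1S2.getD j none = some v →
    ([some x, some m, some Z] : SPat).getD i none = ([some x, none, some m] : SPat).getD j none := by
  intro i j v hi hj
  rcases i with _ | _ | _ | i <;> rcases j with _ | _ | _ | j <;>
    simp [pat1S2, pat123] at hi hj ⊢ <;> omega

end AuxCommon
section AuxStep

lemma step_sim {ρ₁ ρ₂ : SPat} {x m w : ℕ} {τ υ : List ℕ}
    (hxm : x < m) (hxw : x < w)
    (hρ₁ : StarStr ρ₁) (hτ : OrdIso τ (ints ρ₁))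
    (hrepl : Repl [some x, some m, some w] [some x, some w, some m] ρ₁ ρ₂)
    (hυp : IsPermList υ) (hρ₂υ : OrdIso (ints ρ₂) υ) :
    PermEquiv pat123 pat1S2 τ υ := by
  obtain ⟨A, B, C, D, rfl, rfl⟩ := repl_decomp3 _ _ _ _ _ _ hrepl
  set I1 : List ℕ := ints (A ++ some x :: B ++ some m :: C ++ some w :: D) with hI1def
  set Z : ℕ := I1.foldr max 0 + 1 with hZdef
  have hZ : ∀ k ∈ I1, k < Z := fun k hk => by
    have := le_foldr_max I1 k hk; omega
  have hxmem : x ∈ I1 := by simp [hI1def]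
  have hmmem : m ∈ I1 := by simp [hI1def]
  have hwmem : w ∈ I1 := by simp [hI1def]
  have hZnotin : Z ∉ I1 := fun hk => lt_irrefl Z (hZ Z hk)
  have hmZ : m < Z := hZ m hmmem
  have hwZ : w < Z := hZ w hwmem
  have hx0 : 0 < x := hρ₁.2 x hxmem
  have hm0 : 0 < m := hρ₁.2 m hmmem
  have hw0 : 0 < w := hρ₁.2 w hwmem
  set ρ₁' : SPat := A ++ some x :: B ++ none :: some m :: C ++ some w :: D with h1'def
  set ρ₂' : SPat := A ++ some x :: B ++ some w :: some m :: C ++ some Z :: D with h2'def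
  set ρ₂'' : SPat := A ++ some x :: B ++ some w :: none :: C ++ some m :: D with h2''def
  have hI1' : ints ρ₁' = I1 := by simp [h1'def, hI1def]
  have hI2'' : ints ρ₂'' = ints (A ++ some x :: B ++ some w :: C ++ some m :: D) := by
    simp [h2''def]
  have hrepl1 : Repl [some x, none, some w] [some x, some w, some Z] ρ₁' ρ₂' := by
    have := repl_build3 A B (some m :: C) D (some x) (some x) none (some w) (some w) (some Z)
    simpa [h1'def, h2'def] using this
  have hrepl2 : Repl [some x, some m, some Z] [some x, none, some m] ρ₂' ρ₂'' := by
    have := repl_build3 A (B ++ [some w]) C D (some x) (some x) (some m) none (some Z) (some m)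
    simpa [h2'def, h2''def] using this
  have hperm : (ints ρ₂').Perm (Z :: I1) := by
    rw [List.perm_iff_count]
    intro b
    simp only [h2'def, hI1def, ints_append, ints_cons_some, List.count_append,
      List.count_cons]
    ring
  have hnodupZ : (Z :: I1).Nodup := List.nodup_cons.mpr ⟨hZnotin, hρ₁.1⟩
  have hnodup2' : (ints ρ₂').Nodup := hperm.nodup_iff.mpr hnodupZ
  have hpos2' : ∀ k ∈ ints ρ₂', 0 < k := by
    intro k hk
    rcases List.mem_cons.mp (hperm.mem_iff.mp hk) with rfl | hk
    · omega
    · exact hρ₁.2 k hk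
  have hss2' : StarStr ρ₂' := ⟨hnodup2', hpos2'⟩
  set μ : List ℕ := stdz (ints ρ₂') with hμdef
  have hμp : IsPermList μ := stdz_isPermList hnodup2'
  have hOIμ : OrdIso (ints ρ₂') μ := ordIso_stdz _
  have step1 : IsResult pat1S2 pat123 τ μ := by
    refine ⟨ρ₁', ρ₂', [some x, none, some w], [some x, some w, some Z],
      ⟨by rw [hI1']; exact hρ₁.1, by rw [hI1']; exact hρ₁.2⟩,
      by rw [hI1']; exact hτ,
      isCopy_1S2 hxw,
      ⟨by simp [ints]; omega, by intro k hk; simp [ints] at hk; omega⟩,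
      isCopy_123 hxw hwZ,
      ?_, common_1S2_123 x w Z, hrepl1, hμp, hOIμ⟩
    · intro k hk hkin
      rw [hI1'] at hkin
      simp only [ints] at hk ⊢
      simp at hk ⊢
      rcases hk with rfl | rfl | rfl
      · left; rfl
      · right; rfl
      · exact absurd hkin hZnotin
  have step2 : IsResult pat123 pat1S2 μ υ := by
    refine ⟨ρ₂', ρ₂'', [some x, some m, some Z], [some x, none, some m],
      hss2', hOIμ.symm',
      isCopy_123 hxm hmZ,
      ⟨by simp [ints]; omega, by intro k hk; simp [ints] at hk; omega⟩,
      isCopy_1S2 hxm,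
      ?_, common_123_1S2 x m Z, hrepl2, hυp, ?_⟩
    · intro k hk hkin
      simp [ints] at hk ⊢
      tauto
    · rw [hI2'']; exact hρ₂υ
  exact Relation.ReflTransGen.head (Or.inr step1)
    (Relation.ReflTransGen.single (Or.inl step2))

end AuxStep
section AuxMain

lemma step_132 {τ υ : List ℕ} (h : IsResult pat123 pat132 τ υ) :
    PermEquiv pat123 pat1S2 τ υ := by
  obtain ⟨ρ₁, ρ₂, a, b, hss1, hτ, hca, hssb, hcb, hmeet, hcom, hrepl, hυ, hρ₂υ⟩ := h
  obtain ⟨u, v, w, rfl, hiso⟩ := copy_shape3 (p1 := 1) (p2 := 2) (p3 := 3) hca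
  obtain ⟨b1, b2, b3, rfl, hisob⟩ := copy_shape3 (p1 := 1) (p2 := 3) (p3 := 2) hcb
  obtain ⟨h1, h2, h3, h4⟩ := ordIso3_lt hiso
  have huv : u < v := h1.mpr (by norm_num)
  have hvw : v < w := h2.mpr (by norm_num)
  have e1 := hcom 0 0 1 rfl rfl
  have e2 := hcom 1 2 2 rfl rfl
  have e3 := hcom 2 1 3 rfl rfl
  simp [List.getD] at e1 e2 e3
  subst e1; subst e2; subst e3
  exact step_sim huv (lt_trans huv hvw) hss1 hτ hrepl hυ hρ₂υ

lemma step_132' {τ υ : List ℕ} (h : IsResult pat132 pat123 τ υ) :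
    PermEquiv pat123 pat1S2 τ υ := by
  obtain ⟨ρ₁, ρ₂, a, b, hss1, hτ, hca, hssb, hcb, hmeet, hcom, hrepl, hυ, hρ₂υ⟩ := h
  obtain ⟨u, v, w, rfl, hiso⟩ := copy_shape3 (p1 := 1) (p2 := 3) (p3 := 2) hca
  obtain ⟨b1, b2, b3, rfl, hisob⟩ := copy_shape3 (p1 := 1) (p2 := 2) (p3 := 3) hcb
  obtain ⟨h1, h2, h3, h4⟩ := ordIso3_lt hiso
  have huw : u < w := h3.mpr (by norm_num)
  have hwv : w < v := h4.mpr (by norm_num)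
  have e1 := hcom 0 0 1 rfl rfl
  have e2 := hcom 2 1 2 rfl rfl
  have e3 := hcom 1 2 3 rfl rfl
  simp [List.getD] at e1 e2 e3
  subst e1; subst e2; subst e3
  exact step_sim (lt_trans huw hwv) huw hss1 hτ hrepl hυ hρ₂υ

end AuxMain
/-- if two permutations of equal length are equivalent under the
(length-preserving) bidirectional replacement `123 ↔ 132`, then they are
equivalent under `123 ↔ 1★2`. -/
theorem equiv132_implies_equiv1star2 (π σ : List ℕ) (hπ : IsPermList π)
    (hσ : IsPermList σ) (hlen : π.length = σ.length)
    (h : PermEquiv pat123 pat132 π σ) :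
    PermEquiv pat123 pat1S2 π σ := by
  clear hπ hσ hlen
  induction h with
  | refl => exact Relation.ReflTransGen.refl
  | tail hab hbc ih =>
      exact Relation.ReflTransGen.trans ih
        (hbc.elim step_132 step_132')
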